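/- The Jaccard distance J_D(A,B) = 1 - |A ∩ B|/|A ∪ B| (with J_D(∅,∅) = 0) is conditionally negative definite on the family of finite subsets of a set X: for finite families of sets A_1,...,A_n and reals c_1,...,c_n with ∑ c_i = 0, ∑_{i,j} c_i c_j J_D(A_i,A_j) ≤ 0. -/

import Mathlib

/-- The Jaccard distance on finite subsets, with `J_D(∅,∅) = 0`. -/
noncomputable def jaccardDist {X : Type*} [DecidableEq X] (A B : Finset X) : ℝ :=
  if A ∪ B = ∅ then 0 else 1 - ((A ∩ B).card : ℝ) / ((A ∪ B).card : ℝ)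

open Finset

section MinHash
variable {N : ℕ}

noncomputable def argm (σ : Equiv.Perm (Fin N)) (S : Finset (Fin N)) (h : S.Nonempty) : Fin N :=
  σ.symm ((S.image σ).min' (h.image σ))

lemma argm_mem (σ : Equiv.Perm (Fin N)) (S : Finset (Fin N)) (h : S.Nonempty) :
    argm σ S h ∈ S := by
  have := Finset.min'_mem (S.image σ) (h.image σ)
  rw [Finset.mem_image] at this
  obtain ⟨x, hx, hxe⟩ := this
  unfold argm
  rw [← hxe, Equiv.symm_apply_apply]
  exact hx

lemma apply_argm (σ : Equiv.Perm (Fin N)) (S : Finset (Fin N)) (h : S.Nonempty) :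
    σ (argm σ S h) = (S.image σ).min' (h.image σ) := by
  simp [argm]

lemma minIff (σ : Equiv.Perm (Fin N)) (A B : Finset (Fin N)) (h : (A ∪ B).Nonempty) :
    ((A.image σ).min = (B.image σ).min ↔ argm σ (A ∪ B) h ∈ A ∩ B) := by
  set x := argm σ (A ∪ B) h with hx
  have hxm : σ x = ((A ∪ B).image σ).min' (h.image σ) := apply_argm σ (A ∪ B) h
  have hxle : ∀ y ∈ A ∪ B, σ x ≤ σ y := by
    intro y hy
    rw [hxm]
    exact Finset.min'_le _ _ (Finset.mem_image_of_mem σ hy)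
  have hxmem : x ∈ A ∪ B := argm_mem σ (A ∪ B) h
  by_cases hA : A = ∅
  · have hB : B.Nonempty := by
      rcases h with ⟨y, hy⟩
      rw [Finset.mem_union, hA] at hy
      exact ⟨y, hy.resolve_left (by simp)⟩
    constructor
    · intro heq
      exfalso
      rw [hA] at heq
      simp only [Finset.image_empty, Finset.min_empty] at heq
      have h0 := Finset.min_eq_top.mp heq.symm
      rw [Finset.image_eq_empty] at h0
      exact hB.ne_empty h0
    · intro hmem
      exact absurd (Finset.mem_inter.mp hmem).1 (by simp [hA])
  · by_cases hB : B = ∅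
    · have hA' : A.Nonempty := Finset.nonempty_of_ne_empty hA
      constructor
      · intro heq
        exfalso
        rw [hB] at heq
        simp only [Finset.image_empty, Finset.min_empty] at heq
        have h0 := Finset.min_eq_top.mp heq
        rw [Finset.image_eq_empty] at h0
        exact hA'.ne_empty h0
      · intro hmem
        exact absurd (Finset.mem_inter.mp hmem).2 (by simp [hB])
    · have hA' : A.Nonempty := Finset.nonempty_of_ne_empty hA
      have hB' : B.Nonempty := Finset.nonempty_of_ne_empty hB
      have hmA := Finset.coe_min' (hA'.image σ)
      have hmB := Finset.coe_min' (hB'.image σ)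
      set mA := (A.image σ).min' (hA'.image σ)
      set mB := (B.image σ).min' (hB'.image σ)
      have hiff : (A.image σ).min = (B.image σ).min ↔ mA = mB := by
        rw [← hmA, ← hmB]
        exact_mod_cast WithTop.coe_inj
      rw [hiff]
      constructor
      · intro heq
        -- mA = mB =: v; show x ∈ A ∩ B
        have hvA : mA ∈ A.image σ := Finset.min'_mem _ _
        have hvB : mB ∈ B.image σ := Finset.min'_mem _ _
        -- σ x = mA : σ x ≤ mA and mA ≤ σ x
        have h1 : σ x ≤ mA := by
          obtain ⟨a, ha, hae⟩ := Finset.mem_image.mp hvA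
          rw [← hae]; exact hxle a (Finset.mem_union_left _ ha)
        have h2 : mA ≤ σ x := by
          rcases Finset.mem_union.mp hxmem with hxA | hxB
          · exact Finset.min'_le _ _ (Finset.mem_image_of_mem σ hxA)
          · rw [heq]; exact Finset.min'_le _ _ (Finset.mem_image_of_mem σ hxB)
        have hσx : σ x = mA := le_antisymm h1 h2
        obtain ⟨a, ha, hae⟩ := Finset.mem_image.mp hvA
        obtain ⟨b, hb, hbe⟩ := Finset.mem_image.mp hvB
        have hxa : x = a := σ.injective (by rw [hσx, ← hae])
        have hxb : x = b := σ.injective (by rw [hσx, heq, ← hbe])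
        exact Finset.mem_inter.mpr ⟨hxa ▸ ha, hxb ▸ hb⟩
      · intro hmem
        obtain ⟨hxA, hxB⟩ := Finset.mem_inter.mp hmem
        have e1 : mA = σ x := by
          refine le_antisymm (Finset.min'_le _ _ (Finset.mem_image_of_mem σ hxA)) ?_
          obtain ⟨a, ha, hae⟩ := Finset.mem_image.mp (Finset.min'_mem (A.image σ) (hA'.image σ))
          exact le_of_le_of_eq (hxle a (Finset.mem_union_left _ ha)) hae
        have e2 : mB = σ x := by
          refine le_antisymm (Finset.min'_le _ _ (Finset.mem_image_of_mem σ hxB)) ?_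
          obtain ⟨b, hb, hbe⟩ := Finset.mem_image.mp (Finset.min'_mem (B.image σ) (hB'.image σ))
          exact le_of_le_of_eq (hxle b (Finset.mem_union_right _ hb)) hbe
        rw [e1, e2]

lemma argm_unique (σ : Equiv.Perm (Fin N)) (S : Finset (Fin N)) (h : S.Nonempty)
    {x : Fin N} (hx : x ∈ S) (hmin : ∀ y ∈ S, σ x ≤ σ y) : argm σ S h = x := by
  apply σ.injective
  apply le_antisymm
  · rw [apply_argm]
    exact Finset.min'_le _ _ (Finset.mem_image_of_mem σ hx)
  · exact hmin _ (argm_mem σ S h)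

lemma swap_mem {S : Finset (Fin N)} {a b : Fin N} (ha : a ∈ S) (hb : b ∈ S)
    {y : Fin N} (hy : y ∈ S) : Equiv.swap a b y ∈ S := by
  rcases eq_or_ne y a with rfl | hya
  · rwa [Equiv.swap_apply_left]
  rcases eq_or_ne y b with rfl | hyb
  · rwa [Equiv.swap_apply_right]
  · rwa [Equiv.swap_apply_of_ne_of_ne hya hyb]

lemma argm_mul_swap (σ : Equiv.Perm (Fin N)) (S : Finset (Fin N)) (h : S.Nonempty)
    {a b : Fin N} (ha : a ∈ S) (hb : b ∈ S) :
    argm (σ * Equiv.swap a b) S h = Equiv.swap a b (argm σ S h) := by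
  apply argm_unique
  · exact swap_mem ha hb (argm_mem σ S h)
  · intro y hy
    have h1 : (σ * Equiv.swap a b) (Equiv.swap a b (argm σ S h)) = σ (argm σ S h) := by
      simp [Equiv.Perm.mul_apply]
    have h2 : (σ * Equiv.swap a b) y = σ (Equiv.swap a b y) := rfl
    rw [h1, h2]
    rw [apply_argm]
    exact Finset.min'_le _ _ (Finset.mem_image_of_mem σ (swap_mem ha hb hy))

lemma card_fiber_eq (S : Finset (Fin N)) (h : S.Nonempty) {a b : Fin N}
    (ha : a ∈ S) (hb : b ∈ S) :
    (univ.filter (fun σ : Equiv.Perm (Fin N) => argm σ S h = a)).card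
      = (univ.filter (fun σ : Equiv.Perm (Fin N) => argm σ S h = b)).card := by
  apply Finset.card_bij (fun σ _ => σ * Equiv.swap a b)
  · intro σ hσ
    rw [Finset.mem_filter] at hσ ⊢
    refine ⟨Finset.mem_univ _, ?_⟩
    rw [argm_mul_swap σ S h ha hb, hσ.2, Equiv.swap_apply_left]
  · intro σ1 h1 σ2 h2 he
    exact mul_right_cancel he
  · intro τ hτ
    rw [Finset.mem_filter] at hτ
    refine ⟨τ * Equiv.swap a b, Finset.mem_filter.mpr ⟨Finset.mem_univ _, ?_⟩, ?_⟩
    · rw [argm_mul_swap τ S h ha hb, hτ.2, Equiv.swap_apply_right]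
    · rw [mul_assoc, Equiv.swap_mul_self, mul_one]

lemma card_fiber (S : Finset (Fin N)) (h : S.Nonempty) {a : Fin N} (ha : a ∈ S) :
    S.card * (univ.filter (fun σ : Equiv.Perm (Fin N) => argm σ S h = a)).card
      = Fintype.card (Equiv.Perm (Fin N)) := by
  have hpart : (univ : Finset (Equiv.Perm (Fin N))).card
      = ∑ b ∈ S, (univ.filter (fun σ : Equiv.Perm (Fin N) => argm σ S h = b)).card :=
    Finset.card_eq_sum_card_fiberwise (fun σ _ => argm_mem σ S h)
  rw [← Finset.card_univ, hpart,
    Finset.sum_congr rfl (fun b hb => card_fiber_eq S h hb ha),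
    Finset.sum_const, smul_eq_mul]

lemma count_nat (A B : Finset (Fin N)) (h : (A ∪ B).Nonempty) :
    (A ∪ B).card * (univ.filter (fun σ : Equiv.Perm (Fin N) =>
        (A.image σ).min = (B.image σ).min)).card
      = (A ∩ B).card * Fintype.card (Equiv.Perm (Fin N)) := by
  have hfilter : (univ.filter fun σ : Equiv.Perm (Fin N) => (A.image σ).min = (B.image σ).min)
      = univ.filter (fun σ : Equiv.Perm (Fin N) => argm σ (A ∪ B) h ∈ A ∩ B) := by
    apply Finset.filter_congr
    intro σ _
    simp [minIff σ A B h]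
  rw [hfilter]
  have hpart : (univ.filter (fun σ : Equiv.Perm (Fin N) => argm σ (A ∪ B) h ∈ A ∩ B)).card
      = ∑ a ∈ A ∩ B, (univ.filter (fun σ : Equiv.Perm (Fin N) => argm σ (A ∪ B) h = a)).card := by
    rw [Finset.card_eq_sum_card_fiberwise (f := fun σ => argm σ (A ∪ B) h) (t := A ∩ B)
      (s := univ.filter (fun σ : Equiv.Perm (Fin N) => argm σ (A ∪ B) h ∈ A ∩ B))
      (fun σ hσ => Finset.mem_coe.mpr (Finset.mem_filter.mp hσ).2)]
    refine Finset.sum_congr rfl fun a ha => ?_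
    congr 1
    rw [Finset.filter_filter]
    apply Finset.filter_congr
    intro σ _
    constructor
    · exact fun hx => hx.2
    · intro hx
      refine ⟨?_, hx⟩
      show argm σ (A ∪ B) h ∈ A ∩ B
      rwa [hx]
  rw [hpart, Finset.mul_sum]
  rw [Finset.sum_congr rfl (fun a ha => card_fiber (A ∪ B) h
    (Finset.mem_of_subset (Finset.inter_subset_union) ha))]
  rw [Finset.sum_const, smul_eq_mul]

noncomputable def jk {α : Type*} [DecidableEq α] (A B : Finset α) : ℝ :=
  if A ∪ B = ∅ then 1 else ((A ∩ B).card : ℝ) / ((A ∪ B).card : ℝ)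

lemma jk_sum (A B : Finset (Fin N)) :
    (Fintype.card (Equiv.Perm (Fin N)) : ℝ) * jk A B
      = ∑ σ : Equiv.Perm (Fin N),
          (if (A.image σ).min = (B.image σ).min then (1:ℝ) else 0) := by
  rw [Finset.sum_boole]
  by_cases hAB : A ∪ B = ∅
  · obtain ⟨hA, hB⟩ := Finset.union_eq_empty.mp hAB
    rw [jk, if_pos hAB, mul_one]
    subst hA hB
    simp
  · have h : (A ∪ B).Nonempty := Finset.nonempty_of_ne_empty hAB
    have hnat := count_nat A B h
    have hreal : ((A ∪ B).card : ℝ) * ((univ.filter (fun σ : Equiv.Perm (Fin N) =>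
        (A.image σ).min = (B.image σ).min)).card : ℝ)
        = ((A ∩ B).card : ℝ) * (Fintype.card (Equiv.Perm (Fin N)) : ℝ) := by
      exact_mod_cast congrArg (Nat.cast : ℕ → ℝ) hnat
    have hUpos : (0:ℝ) < ((A ∪ B).card : ℝ) := by
      exact_mod_cast Finset.card_pos.mpr h
    rw [jk, if_neg hAB]
    field_simp
    linear_combination -hreal

noncomputable instance withTopFinFintype (N : ℕ) : Fintype (WithTop (Fin N)) :=
  Fintype.ofEquiv (Option (Fin N)) (Equiv.refl _)

lemma pd_ite {n : ℕ} {β : Type*} [Fintype β] [DecidableEq β] (f : Fin n → β) (c : Fin n → ℝ) :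
    0 ≤ ∑ i, ∑ j, c i * c j * (if f i = f j then (1:ℝ) else 0) := by
  have expand : ∑ o : β, (∑ i, if f i = o then c i else 0) ^ 2
      = ∑ i, ∑ j, c i * c j * (if f i = f j then (1:ℝ) else 0) := by
    simp_rw [sq, Finset.sum_mul, Finset.mul_sum]
    rw [Finset.sum_comm]
    refine Finset.sum_congr rfl fun i _ => ?_
    rw [Finset.sum_comm]
    refine Finset.sum_congr rfl fun j _ => ?_
    rw [Finset.sum_eq_single (f i)]
    · by_cases hij : f i = f j
      · rw [if_pos rfl, if_pos hij.symm, if_pos hij]; ring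
      · rw [if_pos rfl, if_neg (fun hh => hij hh.symm), if_neg hij]; ring
    · intro o _ ho
      rw [if_neg (fun hh => ho hh.symm), zero_mul]
    · intro hmem
      exact absurd (Finset.mem_univ _) hmem
  rw [← expand]
  exact Finset.sum_nonneg fun o _ => sq_nonneg _

lemma jk_pd_fin {n : ℕ} (S : Fin n → Finset (Fin N)) (c : Fin n → ℝ) :
    0 ≤ ∑ i, ∑ j, c i * c j * jk (S i) (S j) := by
  have hT : (0:ℝ) < (Fintype.card (Equiv.Perm (Fin N)) : ℝ) := by
    exact_mod_cast Fintype.card_pos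
  have key : 0 ≤ (Fintype.card (Equiv.Perm (Fin N)) : ℝ)
      * ∑ i, ∑ j, c i * c j * jk (S i) (S j) := by
    have step : ∀ i j : Fin n,
        (Fintype.card (Equiv.Perm (Fin N)) : ℝ) * (c i * c j * jk (S i) (S j))
        = ∑ σ : Equiv.Perm (Fin N), c i * c j *
            (if ((S i).image σ).min = ((S j).image σ).min then (1:ℝ) else 0) := by
      intro i j
      rw [show (Fintype.card (Equiv.Perm (Fin N)) : ℝ) * (c i * c j * jk (S i) (S j))
          = c i * c j * ((Fintype.card (Equiv.Perm (Fin N)) : ℝ) * jk (S i) (S j)) by ring,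
        jk_sum, Finset.mul_sum]
    calc (0:ℝ) ≤ ∑ σ : Equiv.Perm (Fin N), ∑ i, ∑ j, c i * c j *
            (if ((S i).image σ).min = ((S j).image σ).min then (1:ℝ) else 0) :=
          Finset.sum_nonneg fun σ _ => pd_ite (fun i => ((S i).image σ).min) c
      _ = ∑ i, ∑ j, ∑ σ : Equiv.Perm (Fin N), c i * c j *
            (if ((S i).image σ).min = ((S j).image σ).min then (1:ℝ) else 0) := by
          rw [Finset.sum_comm]
          exact Finset.sum_congr rfl fun i _ => Finset.sum_comm
      _ = ∑ i, ∑ j, (Fintype.card (Equiv.Perm (Fin N)) : ℝ)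
            * (c i * c j * jk (S i) (S j)) := by
          exact Finset.sum_congr rfl fun i _ => Finset.sum_congr rfl fun j _ => (step i j).symm
      _ = (Fintype.card (Equiv.Perm (Fin N)) : ℝ)
            * ∑ i, ∑ j, c i * c j * jk (S i) (S j) := by
          rw [Finset.mul_sum]
          exact Finset.sum_congr rfl fun i _ => (Finset.mul_sum _ _ _).symm
  exact nonneg_of_mul_nonneg_right key hT

end MinHash

lemma jaccardDist_eq {X : Type*} [DecidableEq X] (A B : Finset X) :
    jaccardDist A B = 1 - jk A B := by
  unfold jaccardDist jk
  split_ifs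
  · norm_num
  · ring

lemma card_attach_filter {X : Type*} [DecidableEq X] (U B : Finset X) (hB : B ⊆ U) :
    (U.attach.filter (fun x => ↑x ∈ B)).card = B.card := by
  refine Finset.card_bij (fun x _ => (x : X)) ?_ ?_ ?_
  · intro x hx; exact (Finset.mem_filter.mp hx).2
  · intro a _ b _ hab; exact Subtype.ext hab
  · intro b hb; exact ⟨⟨b, hB hb⟩, Finset.mem_filter.mpr ⟨Finset.mem_attach _ _, hb⟩, rfl⟩


/-- The Jaccard distance is conditionally negative definite on finite subsets. -/
theorem jaccardDist_cnd {X : Type*} [DecidableEq X] (n : ℕ)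
    (A : Fin n → Finset X) (c : Fin n → ℝ) (hc : ∑ i, c i = 0) :
    ∑ i, ∑ j, c i * c j * jaccardDist (A i) (A j) ≤ 0 := by
  classical
  set U : Finset X := Finset.univ.biUnion A with hU
  have hsub : ∀ i, A i ⊆ U := fun i => Finset.subset_biUnion_of_mem A (Finset.mem_univ i)
  set e : ↥U ≃ Fin U.card := U.equivFin with he
  set S : Fin n → Finset (Fin U.card) :=
    fun i => (U.attach.filter (fun x => ↑x ∈ A i)).image e with hS
  have hci : ∀ i j, (S i ∩ S j).card = (A i ∩ A j).card := by
    intro i j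
    rw [hS]
    rw [← Finset.image_inter _ _ e.injective, ← Finset.filter_and]
    rw [Finset.card_image_of_injective _ e.injective]
    rw [show (U.attach.filter (fun x => ↑x ∈ A i ∧ ↑x ∈ A j))
        = (U.attach.filter (fun x => ↑x ∈ A i ∩ A j)) by
      apply Finset.filter_congr; intro x _; simp [Finset.mem_inter]]
    exact card_attach_filter U (A i ∩ A j)
      ((Finset.inter_subset_left).trans (hsub i))
  have hcu : ∀ i j, (S i ∪ S j).card = (A i ∪ A j).card := by
    intro i j
    rw [hS]
    rw [← Finset.image_union, ← Finset.filter_or]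
    rw [Finset.card_image_of_injective _ e.injective]
    rw [show (U.attach.filter (fun x => ↑x ∈ A i ∨ ↑x ∈ A j))
        = (U.attach.filter (fun x => ↑x ∈ A i ∪ A j)) by
      apply Finset.filter_congr; intro x _; simp [Finset.mem_union]]
    exact card_attach_filter U (A i ∪ A j)
      (Finset.union_subset (hsub i) (hsub j))
  have hjk : ∀ i j, jk (A i) (A j) = jk (S i) (S j) := by
    intro i j
    have hemp : (S i ∪ S j) = ∅ ↔ (A i ∪ A j) = ∅ := by
      rw [← Finset.card_eq_zero, hcu i j, Finset.card_eq_zero]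
    unfold jk
    rw [if_congr hemp.symm rfl rfl, hci, hcu]
  have hpd := jk_pd_fin S c
  have expand : ∀ i j : Fin n, c i * c j * jaccardDist (A i) (A j)
      = c i * c j - c i * c j * jk (S i) (S j) := by
    intro i j
    rw [jaccardDist_eq, ← hjk i j]
    ring
  calc ∑ i, ∑ j, c i * c j * jaccardDist (A i) (A j)
      = ∑ i, ∑ j, (c i * c j - c i * c j * jk (S i) (S j)) := by
        exact Finset.sum_congr rfl fun i _ => Finset.sum_congr rfl fun j _ => expand i j
    _ = (∑ i, ∑ j, c i * c j) - ∑ i, ∑ j, c i * c j * jk (S i) (S j) := by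
        rw [← Finset.sum_sub_distrib]
        exact Finset.sum_congr rfl fun i _ => Finset.sum_sub_distrib _ _
    _ = 0 - ∑ i, ∑ j, c i * c j * jk (S i) (S j) := by
        rw [← Finset.sum_mul_sum, hc, zero_mul]
    _ ≤ 0 := by linarith
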